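/- The Fock space 𝓕 is irreducible: every K-linear subspace of 𝓕 that is stable under the operators E_J and F_J for all real intervals J is either {0} or all of 𝓕. -/

import Mathlib

noncomputable section
open Function
open scoped Classical

/-- The `ℕ`-valued indicator function of the interval `[a, b)`. -/
def ind (a b : ℝ) : ℝ → ℕ := (Set.Ico a b).indicator fun _ => 1

/-- A real pyramid: a function `p : ℝ → ℕ` vanishing outside a bounded set, maximal at `0`,
nondecreasing on `(-∞, 0]`, nonincreasing on `[0, ∞)`, right-continuous and piecewise
constant with finitely many discontinuities, and with jumps of size at most 1
(`p₋(x)` is the left limit of `p` at `x`). -/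
def IsRealPyramid (p : ℝ → ℕ) : Prop :=
  (∃ M : ℝ, ∀ x : ℝ, M ≤ |x| → p x = 0) ∧
  (∀ x, p x ≤ p 0) ∧
  (∀ ⦃x y : ℝ⦄, x ≤ y → y ≤ 0 → p x ≤ p y) ∧
  (∀ ⦃x y : ℝ⦄, 0 ≤ x → x ≤ y → p y ≤ p x) ∧
  (∀ x, ContinuousWithinAt p (Set.Ici x) x) ∧
  {x : ℝ | ¬ ContinuousAt p x}.Finite ∧
  (∀ x, |(p x : ℤ) - ((Function.leftLim p x : ℕ) : ℤ)| ≤ 1)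

/-- The interval `[a, b)` is addable for `p` if `p + 1_{[a,b)}` is again a real pyramid. -/
def Addable (p : ℝ → ℕ) (a b : ℝ) : Prop := IsRealPyramid (fun x => p x + ind a b x)

/-- The interval `[a, b)` is removable for `p` if `p ≥ 1` on `[a, b)` and `p − 1_{[a,b)}`
is again a real pyramid. -/
def Removable (p : ℝ → ℕ) (a b : ℝ) : Prop :=
  (∀ x ∈ Set.Ico a b, 1 ≤ p x) ∧ IsRealPyramid (fun x => p x - ind a b x)

/-- `n_J(p)`: `1` if `J = [a,b)` is addable for `p`, `−1` if removable, `0` otherwise. -/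
def nJ (p : ℝ → ℕ) (a b : ℝ) : ℤ :=
  if Addable p a b then 1 else if Removable p a b then -1 else 0

/-- The base field `K = ℚ(t)`. -/
abbrev K : Type := RatFunc ℚ

/-- The variable `t ∈ K` (playing the role of `υ^{1/2}`). -/
def tK : K := RatFunc.X

/-- The quantum parameter `v := t²`. -/
def vK : K := tK ^ 2

/-- The type of real pyramids. -/
def Pyr : Type := {p : ℝ → ℕ // IsRealPyramid p}

/-- The Fock space: the `K`-vector space with basis `|p⟩` indexed by real pyramids. -/
abbrev Fock : Type := Pyr →₀ K

/-- `E_J |p⟩ = −t·(−v)^{p(b)−p(a)} |p − 1_J⟩` if `J = [a,b)` is removable for `p`,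
and `0` otherwise. -/
def Evec (a b : ℝ) (p : Pyr) : Fock :=
  if h : Removable p.1 a b then
    Finsupp.single ⟨fun x => p.1 x - ind a b x, h.2⟩
      (-tK * (-vK) ^ ((p.1 b : ℤ) - (p.1 a : ℤ)))
  else 0

/-- `F_J |p⟩ = t·(−v)^{p(a)−p(b)} |p + 1_J⟩` if `J = [a,b)` is addable for `p`,
and `0` otherwise. -/
def Fvec (a b : ℝ) (p : Pyr) : Fock :=
  if h : Addable p.1 a b then
    Finsupp.single ⟨fun x => p.1 x + ind a b x, h⟩
      (tK * (-vK) ^ ((p.1 a : ℤ) - (p.1 b : ℤ)))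
  else 0

/-- The `K`-linear operator `E_J` on the Fock space. -/
def Eop (a b : ℝ) : Fock →ₗ[K] Fock :=
  Finsupp.lsum K fun p => LinearMap.toSpanSingleton K Fock (Evec a b p)

/-- The `K`-linear operator `F_J` on the Fock space. -/
def Fop (a b : ℝ) : Fock →ₗ[K] Fock :=
  Finsupp.lsum K fun p => LinearMap.toSpanSingleton K Fock (Fvec a b p)

/-- The `K`-linear operator `K_J` on the Fock space: `K_J |p⟩ = v^{n_J(p)} |p⟩`. -/
def Kop (a b : ℝ) : Fock →ₗ[K] Fock :=
  Finsupp.lsum K fun p =>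
    LinearMap.toSpanSingleton K Fock (Finsupp.single p (vK ^ (nJ p.1 a b)))

/-- The `K`-linear operator `K_J⁻¹` on the Fock space: `K_J⁻¹ |p⟩ = v^{−n_J(p)} |p⟩`. -/
def Kinvop (a b : ℝ) : Fock →ₗ[K] Fock :=
  Finsupp.lsum K fun p =>
    LinearMap.toSpanSingleton K Fock (Finsupp.single p (vK ^ (-nJ p.1 a b)))

open Function Set Filter Topology

section Helpers
/-! ### Discrete-topology helpers -/

lemma cwa_iff (f : ℝ → ℕ) (s : Set ℝ) (x : ℝ) :
    ContinuousWithinAt f s x ↔ ∀ᶠ y in 𝓝[s] x, f y = f x := by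
  constructor
  · intro h; exact h ((isOpen_discrete {f x}).mem_nhds rfl)
  · intro h; exact Tendsto.congr' (h.mono fun y hy => hy.symm) tendsto_const_nhds

lemma ca_iff (f : ℝ → ℕ) (x : ℝ) :
    ContinuousAt f x ↔ ∀ᶠ y in 𝓝 x, f y = f x := by
  constructor
  · intro h; exact h ((isOpen_discrete {f x}).mem_nhds rfl)
  · intro h; exact Tendsto.congr' (h.mono fun y hy => hy.symm) tendsto_const_nhds

lemma leftLim_of_evconst {f : ℝ → ℕ} {x : ℝ} {c : ℕ} (h : ∀ᶠ y in 𝓝[<] x, f y = c) :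
    leftLim f x = c := by
  apply leftLim_eq_of_tendsto
  exact Tendsto.congr' (h.mono fun y hy => hy.symm) tendsto_const_nhds

lemma evconst_of_Ioo {f : ℝ → ℕ} {u x : ℝ} {c : ℕ} (hux : u < x)
    (h : ∀ y ∈ Ioo u x, f y = c) : ∀ᶠ y in 𝓝[<] x, f y = c :=
  eventually_of_mem (Ioo_mem_nhdsLT hux) h

lemma leftLim_of_Ioo {f : ℝ → ℕ} {u x : ℝ} {c : ℕ} (hux : u < x)
    (h : ∀ y ∈ Ioo u x, f y = c) : leftLim f x = c :=
  leftLim_of_evconst (evconst_of_Ioo hux h)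

/-- if a function is continuous on `Ico u v` (into `ℕ`) it is constant there -/
lemma constOn_Ico {f : ℝ → ℕ} {u v : ℝ}
    (hrc : ContinuousWithinAt f (Ici u) u)
    (h : ∀ y ∈ Ioo u v, ContinuousAt f y) :
    ∀ y ∈ Ico u v, f y = f u := by
  intro y hy
  have hco : ContinuousOn f (Ico u v) := by
    intro z hz
    rcases eq_or_lt_of_le hz.1 with rfl | hlt
    · exact hrc.mono Ico_subset_Ici_self
    · exact (h z ⟨hlt, hz.2⟩).continuousWithinAt
  exact (ordConnected_Ico.isPreconnected).constant hco hy ⟨le_refl u, lt_of_le_of_lt hy.1 hy.2⟩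

/-- continuity at `x` follows from right continuity and left-limit agreement -/
lemma contAt_of_left {f : ℝ → ℕ} {x u : ℝ} (hux : u < x)
    (hrc : ContinuousWithinAt f (Ici x) x)
    (h : ∀ y ∈ Ioo u x, f y = f x) : ContinuousAt f x := by
  rw [ca_iff]
  rw [← nhdsLT_sup_nhdsGE x, eventually_sup]
  constructor
  · exact evconst_of_Ioo hux h
  · exact (cwa_iff _ _ _).1 hrc

end Helpers
section PyrStruct
variable {p : ℝ → ℕ}

lemma exists_gap (hp : IsRealPyramid p) {x : ℝ} (w : ℝ) (hw : w < x) :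
    ∃ u, w ≤ u ∧ u < x ∧ ∀ y ∈ Ioo u x, ContinuousAt p y := by
  classical
  set Dfin := hp.2.2.2.2.2.1.toFinset with hD
  set F := Dfin.filter (· < x) with hF
  rcases F.eq_empty_or_nonempty with h | h
  · refine ⟨w, le_refl _, hw, fun y hy => ?_⟩
    by_contra hc
    have : y ∈ F := by
      simp only [hF, Finset.mem_filter, hD, Set.Finite.mem_toFinset]
      exact ⟨hc, hy.2⟩
    rw [h] at this; exact absurd this (Finset.notMem_empty y)
  · refine ⟨max (F.max' h) w, le_max_right _ _, ?_, fun y hy => ?_⟩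
    · exact max_lt (by
        have := F.max'_mem h
        simp only [hF, Finset.mem_filter] at this
        exact this.2) hw
    · by_contra hc
      have hyF : y ∈ F := by
        simp only [hF, Finset.mem_filter, hD, Set.Finite.mem_toFinset]
        exact ⟨hc, hy.2⟩
      have := F.le_max' y hyF
      have h2 := hy.1
      have := le_max_left (F.max' h) w
      linarith

lemma leftVal (hp : IsRealPyramid p) {x : ℝ} (w : ℝ) (hw : w < x) :
    ∃ u, w ≤ u ∧ u < x ∧ leftLim p x = p u ∧ ∀ y ∈ Ico u x, p y = p u := by
  obtain ⟨u, hwu, hux, hgap⟩ := exists_gap hp w hw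
  have hconst := constOn_Ico (hp.2.2.2.2.1 u) hgap
  exact ⟨u, hwu, hux, leftLim_of_Ioo hux (fun y hy => hconst y ⟨hy.1.le, hy.2⟩), hconst⟩

lemma disc_iff (hp : IsRealPyramid p) (x : ℝ) :
    ¬ContinuousAt p x ↔ leftLim p x ≠ p x := by
  obtain ⟨u, _, hux, hll, hconst⟩ := leftVal hp (x - 1) (by linarith)
  constructor
  · intro hd hll'
    exact hd (contAt_of_left hux (hp.2.2.2.2.1 x)
      (fun y hy => by rw [hconst y ⟨hy.1.le, hy.2⟩, ← hll', hll]))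
  · intro hne hc
    apply hne
    have := (ca_iff p x).1 hc
    exact leftLim_of_evconst (nhdsWithin_le_nhds this)

lemma jump_up (hp : IsRealPyramid p) {d : ℝ} (hd : ¬ContinuousAt p d) (hd0 : d ≤ 0) :
    (p d : ℤ) = ((leftLim p d : ℕ) : ℤ) + 1 := by
  obtain ⟨u, _, hud, hll, _⟩ := leftVal hp (d - 1) (by linarith)
  have h1 : p u ≤ p d := hp.2.2.1 hud.le hd0
  have h2 : leftLim p d ≠ p d := (disc_iff hp d).1 hd
  have h3 := hp.2.2.2.2.2.2 d
  rw [hll] at h2 ⊢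
  rw [abs_le] at h3
  rw [hll] at h3
  omega

lemma jump_down (hp : IsRealPyramid p) {d : ℝ} (hd : ¬ContinuousAt p d) (hd0 : 0 < d) :
    (p d : ℤ) = ((leftLim p d : ℕ) : ℤ) - 1 := by
  obtain ⟨u, hwu, hud, hll, _⟩ := leftVal hp (x := d) (d / 2) (by linarith)
  have hu0 : 0 ≤ u := le_trans (by linarith) hwu
  have h1 : p d ≤ p u := hp.2.2.2.1 hu0 hud.le
  have h2 : leftLim p d ≠ p d := (disc_iff hp d).1 hd
  have h3 := hp.2.2.2.2.2.2 d
  rw [hll] at h2 ⊢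
  rw [abs_le] at h3
  rw [hll] at h3
  omega

/-- value propagates rightwards across continuity regions -/
lemma valB (hp : IsRealPyramid p) {u x : ℝ} (hux : u ≤ x)
    (hgap : ∀ z ∈ Ioc u x, ContinuousAt p z) : p x = p u := by
  rcases eq_or_lt_of_le hux with rfl | h
  · rfl
  · have hconst := constOn_Ico (hp.2.2.2.2.1 u) (fun y hy => hgap y ⟨hy.1, hy.2.le⟩)
    have hcx : ContinuousAt p x := hgap x ⟨h, le_refl x⟩
    have hll : leftLim p x = p u := leftLim_of_Ioo h (fun y hy => hconst y ⟨hy.1.le, hy.2⟩)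
    have : ¬ (leftLim p x ≠ p x) := by rw [← disc_iff hp]; exact not_not_intro hcx
    rw [not_ne_iff] at this
    rw [← this, hll]

end PyrStruct
section Count
variable {p : ℝ → ℕ}

lemma count (hp : IsRealPyramid p) (E : Finset ℝ)
    (hE : ∀ z, z ∈ E ↔ ¬ContinuousAt p z) (x : ℝ) :
    (p x : ℤ) = (E.filter (fun d => d ≤ x ∧ d ≤ 0)).card
      - (E.filter (fun d => d ≤ x ∧ 0 < d)).card := by
  classical
  suffices H : ∀ n : ℕ, ∀ x : ℝ, (E.filter (fun d => d ≤ x)).card = n →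
      (p x : ℤ) = (E.filter (fun d => d ≤ x ∧ d ≤ 0)).card
        - (E.filter (fun d => d ≤ x ∧ 0 < d)).card from H _ x rfl
  intro n
  induction n using Nat.strong_induction_on with
  | _ n IH =>
  intro x hn
  rcases (E.filter (fun d => d ≤ x)).eq_empty_or_nonempty with hemp | hne
  · -- no discontinuities at all below x
    obtain ⟨M, hM⟩ := hp.1
    set u := min x (-(|M| + 1)) - 1 with hu
    have hux : u ≤ x := by
      have := min_le_left x (-(|M| + 1)); linarith
    have hpu : p u = 0 := by
      apply hM
      have h1 : u ≤ -(|M|+1) - 1 := by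
        have := min_le_right x (-(|M| + 1)); linarith
      have hM0 : M ≤ |M| := le_abs_self M
      have hM1 : (0:ℝ) ≤ |M| := abs_nonneg M
      have h2 : |u| = -u := abs_of_nonpos (by linarith)
      linarith
    have hgap : ∀ z ∈ Ioc u x, ContinuousAt p z := by
      intro z hz
      by_contra hc
      have : z ∈ E.filter (fun d => d ≤ x) := by
        simp only [Finset.mem_filter, hE]; exact ⟨hc, hz.2⟩
      rw [hemp] at this; exact absurd this (Finset.notMem_empty z)
    have hA : E.filter (fun d => d ≤ x ∧ d ≤ 0) = ∅ := by
      apply Finset.eq_empty_of_forall_notMem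
      intro z hz
      rw [Finset.mem_filter] at hz
      have : z ∈ E.filter (fun d => d ≤ x) := by
        rw [Finset.mem_filter]; exact ⟨hz.1, hz.2.1⟩
      rw [hemp] at this; exact absurd this (Finset.notMem_empty z)
    have hB : E.filter (fun d => d ≤ x ∧ 0 < d) = ∅ := by
      apply Finset.eq_empty_of_forall_notMem
      intro z hz
      rw [Finset.mem_filter] at hz
      have : z ∈ E.filter (fun d => d ≤ x) := by
        rw [Finset.mem_filter]; exact ⟨hz.1, hz.2.1⟩
      rw [hemp] at this; exact absurd this (Finset.notMem_empty z)
    rw [valB hp hux hgap, hpu, hA, hB]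
    simp
  · -- there is a largest discontinuity `d ≤ x`
    set F := E.filter (fun d => d ≤ x) with hF
    set d := F.max' hne with hd
    have hdF : d ∈ F := F.max'_mem hne
    have hdE : d ∈ E := (Finset.mem_filter.1 hdF).1
    have hdx : d ≤ x := (Finset.mem_filter.1 hdF).2
    have hdd : ¬ContinuousAt p d := (hE d).1 hdE
    have hpx : p x = p d := by
      apply valB hp hdx
      intro z hz
      by_contra hc
      have : z ∈ F := by rw [hF, Finset.mem_filter, hE]; exact ⟨hc, hz.2⟩
      have := F.le_max' z this
      rw [← hd] at this
      exact absurd this (not_le.2 hz.1)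
    -- choose y just below d capturing the remaining discontinuities
    set Fe := F.erase d with hFe
    have hy : ∃ y : ℝ, y < d ∧ ∀ e ∈ Fe, e ≤ y := by
      rcases Fe.eq_empty_or_nonempty with h2 | h2
      · exact ⟨d - 1, by linarith, fun e he => by rw [h2] at he; exact absurd he (Finset.notMem_empty e)⟩
      · refine ⟨(Fe.max' h2 + d) / 2, ?_, fun e he => ?_⟩
        · have hm : Fe.max' h2 < d := by
            have hmm := Fe.max'_mem h2
            have h3 : Fe.max' h2 ∈ F := Finset.erase_subset d F hmm
            have h4 := F.le_max' _ h3
            rw [← hd] at h4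
            rcases eq_or_lt_of_le h4 with h5 | h5
            · exfalso; exact (Finset.ne_of_mem_erase hmm) h5
            · exact h5
          linarith
        · have h3 := Fe.le_max' e he
          have hm : Fe.max' h2 < d := by
            have hmm := Fe.max'_mem h2
            have h4 := F.le_max' _ (Finset.erase_subset d F hmm)
            rw [← hd] at h4
            rcases eq_or_lt_of_le h4 with h5 | h5
            · exact absurd h5 (Finset.ne_of_mem_erase hmm)
            · exact h5
          linarith
    obtain ⟨y, hyd, hyFe⟩ := hy
    have hfilt_y : E.filter (fun e => e ≤ y) = Fe := by
      ext e
      rw [Finset.mem_filter, hFe, Finset.mem_erase, hF, Finset.mem_filter]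
      constructor
      · rintro ⟨heE, hey⟩
        exact ⟨by rintro rfl; exact absurd hey (not_le.2 hyd), heE, by linarith⟩
      · rintro ⟨hed, heE, hex⟩
        refine ⟨heE, hyFe e ?_⟩
        rw [hFe, Finset.mem_erase, hF, Finset.mem_filter]
        exact ⟨hed, heE, hex⟩
    have hcard : (E.filter (fun e => e ≤ y)).card = n - 1 := by
      rw [hfilt_y, hFe, Finset.card_erase_of_mem hdF, hn]
    have hn1 : 1 ≤ n := by
      rw [← hn]; exact Finset.card_pos.2 hne
    have hIH := IH (n - 1) (by omega) y hcard
    -- left limit of p at d is p y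
    have hll : leftLim p d = p y := by
      have hconst := constOn_Ico (hp.2.2.2.2.1 y) (fun z hz => by
        by_contra hc
        have hzF : z ∈ F := by
          rw [hF, Finset.mem_filter, hE]
          exact ⟨hc, le_trans hz.2.le hdx⟩
        have : z ∈ Fe := Finset.mem_erase.2 ⟨ne_of_lt hz.2, hzF⟩
        have := hyFe z this
        exact absurd this (not_le.2 hz.1))
      exact leftLim_of_Ioo hyd (fun z hz => hconst z ⟨hz.1.le, hz.2⟩)
    -- membership bookkeeping for the two filters
    have key : ∀ e, e ∈ E → e ≤ x → (e = d ∨ e ≤ y) := by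
      intro e heE hex
      by_cases h : e = d
      · exact Or.inl h
      · right
        apply hyFe
        exact Finset.mem_erase.2 ⟨h, Finset.mem_filter.2 ⟨heE, hex⟩⟩
    have hdy : ¬ d ≤ y := not_le.2 hyd
    by_cases hd0 : d ≤ 0
    · have hAx : E.filter (fun e => e ≤ x ∧ e ≤ 0)
          = insert d (E.filter (fun e => e ≤ y ∧ e ≤ 0)) := by
        ext e
        simp only [Finset.mem_filter, Finset.mem_insert]
        constructor
        · rintro ⟨heE, hex, he0⟩
          rcases key e heE hex with rfl | hey
          · exact Or.inl rfl
          · exact Or.inr ⟨heE, hey, he0⟩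
        · rintro (rfl | ⟨heE, hey, he0⟩)
          · exact ⟨hdE, hdx, hd0⟩
          · exact ⟨heE, by linarith, he0⟩
      have hBx : E.filter (fun e => e ≤ x ∧ 0 < e)
          = E.filter (fun e => e ≤ y ∧ 0 < e) := by
        ext e
        simp only [Finset.mem_filter]
        constructor
        · rintro ⟨heE, hex, he0⟩
          rcases key e heE hex with rfl | hey
          · exfalso; exact absurd hd0 (not_le.2 he0)
          · exact ⟨heE, hey, he0⟩
        · rintro ⟨heE, hey, he0⟩
          exact ⟨heE, by linarith, he0⟩
      have hnotmem : d ∉ E.filter (fun e => e ≤ y ∧ e ≤ 0) := by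
        rw [Finset.mem_filter]
        rintro ⟨-, h1, -⟩; exact hdy h1
      have hjump := jump_up hp hdd hd0
      rw [hll] at hjump
      rw [hpx, hAx, hBx, Finset.card_insert_of_notMem hnotmem]
      push_cast
      rw [hjump, hIH]
      ring
    · push_neg at hd0
      have hAx : E.filter (fun e => e ≤ x ∧ e ≤ 0)
          = E.filter (fun e => e ≤ y ∧ e ≤ 0) := by
        ext e
        simp only [Finset.mem_filter]
        constructor
        · rintro ⟨heE, hex, he0⟩
          rcases key e heE hex with rfl | hey
          · exfalso; exact absurd he0 (not_le.2 hd0)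
          · exact ⟨heE, hey, he0⟩
        · rintro ⟨heE, hey, he0⟩
          exact ⟨heE, by linarith, he0⟩
      have hBx : E.filter (fun e => e ≤ x ∧ 0 < e)
          = insert d (E.filter (fun e => e ≤ y ∧ 0 < e)) := by
        ext e
        simp only [Finset.mem_filter, Finset.mem_insert]
        constructor
        · rintro ⟨heE, hex, he0⟩
          rcases key e heE hex with rfl | hey
          · exact Or.inl rfl
          · exact Or.inr ⟨heE, hey, he0⟩
        · rintro (rfl | ⟨heE, hey, he0⟩)
          · exact ⟨hdE, hdx, hd0⟩
          · exact ⟨heE, by linarith, he0⟩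
      have hnotmem : d ∉ E.filter (fun e => e ≤ y ∧ 0 < e) := by
        rw [Finset.mem_filter]
        rintro ⟨-, h1, -⟩; exact hdy h1
      have hjump := jump_down hp hdd hd0
      rw [hll] at hjump
      rw [hpx, hAx, hBx, Finset.card_insert_of_notMem hnotmem]
      push_cast
      rw [hjump, hIH]
      ring

/-- two pyramids with the same discontinuity set are equal -/
lemma eq_of_disc_eq {p q : ℝ → ℕ} (hp : IsRealPyramid p) (hq : IsRealPyramid q)
    (h : {x : ℝ | ¬ContinuousAt p x} = {x : ℝ | ¬ContinuousAt q x}) : p = q := by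
  classical
  set E := hp.2.2.2.2.2.1.toFinset with hEdef
  have hEp : ∀ z, z ∈ E ↔ ¬ContinuousAt p z := fun z => Set.Finite.mem_toFinset _
  have hEq : ∀ z, z ∈ E ↔ ¬ContinuousAt q z := by
    intro z
    rw [hEp z]
    exact iff_of_eq (congrArg (z ∈ ·) h)
  funext x
  have h1 := count hp E hEp x
  have h2 := count hq E hEq x
  have : (p x : ℤ) = (q x : ℤ) := by rw [h1, h2]
  exact_mod_cast this

end Count
section IndLemmas

lemma ind_eq_ite (a b x : ℝ) : ind a b x = if a ≤ x ∧ x < b then 1 else 0 := by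
  simp [ind, Set.indicator_apply, Set.mem_Ico]

lemma ind_of_mem {a b x : ℝ} (h1 : a ≤ x) (h2 : x < b) : ind a b x = 1 := by
  rw [ind_eq_ite]; simp [h1, h2]

lemma ind_of_not_mem {a b x : ℝ} (h : ¬(a ≤ x ∧ x < b)) : ind a b x = 0 := by
  rw [ind_eq_ite]; simp only [if_neg h]

lemma ind_right (a b x : ℝ) : ∀ᶠ y in 𝓝[Ici x] x, ind a b y = ind a b x := by
  rcases lt_or_ge x a with h | h
  · have : Iio a ∈ 𝓝[Ici x] x := nhdsWithin_le_nhds (Iio_mem_nhds h)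
    filter_upwards [this] with y hy
    rw [ind_of_not_mem (fun hc => absurd hy (not_lt.2 hc.1)),
        ind_of_not_mem (fun hc => absurd h (not_lt.2 hc.1))]
  · rcases lt_or_ge x b with h2 | h2
    · have h3 : Iio b ∈ 𝓝[Ici x] x := nhdsWithin_le_nhds (Iio_mem_nhds h2)
      filter_upwards [h3, self_mem_nhdsWithin] with y hy hy2
      rw [ind_of_mem (le_trans h hy2) hy, ind_of_mem h h2]
    · filter_upwards [self_mem_nhdsWithin] with y hy
      rw [ind_of_not_mem (fun hc => absurd (lt_of_le_of_lt (le_trans h2 hy) hc.2) (lt_irrefl b)),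
          ind_of_not_mem (fun hc => absurd (lt_of_le_of_lt h2 hc.2) (lt_irrefl b))]

lemma ind_local {a b x : ℝ} (hxa : x ≠ a) (hxb : x ≠ b) :
    ∀ᶠ y in 𝓝 x, ind a b y = ind a b x := by
  rcases lt_or_ge x a with h | h
  · filter_upwards [Iio_mem_nhds h] with y hy
    rw [ind_of_not_mem (fun hc => absurd hy (not_lt.2 hc.1)),
        ind_of_not_mem (fun hc => absurd h (not_lt.2 hc.1))]
  · have h' : a < x := lt_of_le_of_ne h (Ne.symm hxa)
    rcases lt_or_ge x b with h2 | h2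
    · filter_upwards [Ioo_mem_nhds h' h2] with y hy
      rw [ind_of_mem hy.1.le hy.2, ind_of_mem h h2]
    · have h2' : b < x := lt_of_le_of_ne h2 (Ne.symm hxb)
      filter_upwards [Ioi_mem_nhds h2'] with y hy
      rw [ind_of_not_mem (fun hc => absurd (Set.mem_Ioi.1 hy) (not_lt.2 hc.2.le)),
          ind_of_not_mem (fun hc => absurd h2 (not_le.2 hc.2))]

/-- the left-limit value of `ind a b` at `x` together with a witness interval -/
lemma ind_left {a b : ℝ} (hab : a < b) (x : ℝ) :
    ∃ w, w < x ∧ ∀ y ∈ Ioo w x, ind a b y = (if a < x ∧ x ≤ b then 1 else 0) := by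
  rcases le_or_gt x a with h | h
  · refine ⟨x - 1, by linarith, fun y hy => ?_⟩
    rw [if_neg (fun hc => absurd (lt_of_lt_of_le hc.1 h) (lt_irrefl a))]
    exact ind_of_not_mem (fun hc => absurd (lt_of_le_of_lt hc.1 hy.2) (not_lt.2 h))
  · rcases le_or_gt x b with h2 | h2
    · refine ⟨a, h, fun y hy => ?_⟩
      rw [if_pos ⟨h, h2⟩]
      exact ind_of_mem hy.1.le (lt_of_lt_of_le hy.2 h2)
    · refine ⟨max b (x - 1), max_lt h2 (by linarith), fun y hy => ?_⟩
      rw [if_neg (fun hc => absurd h2 (not_lt.2 hc.2))]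
      exact ind_of_not_mem (fun hc =>
        absurd (lt_of_le_of_lt (le_max_left b (x-1)) hy.1) (not_lt.2 hc.2.le))

variable {p : ℝ → ℕ} {a b : ℝ}

lemma rc_comb (op : ℕ → ℕ → ℕ) (hp : ∀ x, ContinuousWithinAt p (Ici x) x) (x : ℝ) :
    ContinuousWithinAt (fun y => op (p y) (ind a b y)) (Ici x) x := by
  rw [cwa_iff]
  filter_upwards [(cwa_iff p (Ici x) x).1 (hp x), ind_right a b x] with y h1 h2
  rw [h1, h2]

lemma disc_comb (op : ℕ → ℕ → ℕ) (hfin : {x : ℝ | ¬ContinuousAt p x}.Finite) :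
    {x : ℝ | ¬ContinuousAt (fun y => op (p y) (ind a b y)) x}.Finite := by
  apply Set.Finite.subset (hfin.insert a |>.insert b)
  intro x hx
  simp only [Set.mem_setOf_eq] at hx
  by_contra hc
  simp only [Set.mem_insert_iff, Set.mem_setOf_eq] at hc
  push_neg at hc
  obtain ⟨hxb, hxa, hcont⟩ := hc
  apply hx
  rw [ca_iff]
  filter_upwards [(ca_iff p x).1 hcont, ind_local hxa hxb] with y h1 h2
  rw [h1, h2]

lemma leftLim_comb (hp : IsRealPyramid p) (op : ℕ → ℕ → ℕ) (hab : a < b) (x : ℝ) :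
    leftLim (fun y => op (p y) (ind a b y)) x
      = op (leftLim p x) (if a < x ∧ x ≤ b then 1 else 0) := by
  obtain ⟨w, hwx, hw⟩ := ind_left hab x
  obtain ⟨u, hwu, hux, hll, hconst⟩ := leftVal hp w hwx
  rw [hll]
  apply leftLim_of_Ioo hux
  intro y hy
  rw [hconst y ⟨hy.1.le, hy.2⟩, hw y ⟨lt_of_le_of_lt hwu hy.1, hy.2⟩]

end IndLemmas
section Probe
variable {p : ℝ → ℕ}

lemma probeL (hp : IsRealPyramid p) {a0 d : ℝ} (ha0d : a0 < d) (hd0 : d ≤ 0)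
    (h0 : ∀ x, x ≤ a0 → p x = 0) : Addable p a0 d ↔ ¬ContinuousAt p d := by
  obtain ⟨u, hau, hud, hll, hconst⟩ := leftVal hp (x := d) a0 ha0d
  have hu0 : u ≤ 0 := le_trans hud.le hd0
  have hindd : ind a0 d d = 0 := ind_of_not_mem (fun hc => lt_irrefl d hc.2)
  have hindu : ind a0 d u = 1 := ind_of_mem hau hud
  constructor
  · intro hadd
    have hmono := hadd.2.2.1 hud.le hd0
    simp only [hindd, hindu] at hmono
    apply (disc_iff hp d).2
    rw [hll]
    omega
  · intro hd
    have hne : p u ≠ p d := by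
      have := (disc_iff hp d).1 hd; rw [hll] at this; exact this
    have hmono : p u ≤ p d := hp.2.2.1 hud.le hd0
    have hjump : p d = p u + 1 := by
      have h := hp.2.2.2.2.2.2 d
      rw [hll, abs_le] at h
      omega
    have hbound : ∀ x ∈ Ico a0 d, p x ≤ p u := by
      intro x hx
      rcases le_or_gt u x with h | h
      · rw [hconst x ⟨h, hx.2⟩]
      · exact hp.2.2.1 h.le hu0
    show IsRealPyramid fun x => p x + ind a0 d x
    obtain ⟨M, hM⟩ := hp.1
    refine ⟨⟨|M| + |a0| + |d| + 1, fun x hx => ?_⟩, fun x => ?_, fun x y hxy hy0 => ?_,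
      fun x y hx0 hxy => ?_, fun x => rc_comb (fun m n => m + n) hp.2.2.2.2.1 x,
      disc_comb (fun m n => m + n) hp.2.2.2.2.2.1, fun x => ?_⟩
    · -- bounded
      beta_reduce
      have h1 : p x = 0 := by
        apply hM
        have := abs_nonneg a0; have := abs_nonneg d; have := le_abs_self M; linarith
      have h2 : ind a0 d x = 0 := by
        apply ind_of_not_mem
        rintro ⟨hc1, hc2⟩
        have h3 : |x| ≤ |a0| + |d| := by
          rw [abs_le]
          constructor
          · have := neg_abs_le a0; have := abs_nonneg d; linarith
          · have := le_abs_self d; have := abs_nonneg a0; linarith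
        have := abs_nonneg M; linarith
      rw [h1, h2]
    · -- max at 0
      beta_reduce
      have hind0 : ind a0 d 0 = 0 := ind_of_not_mem (fun hc => absurd hc.2 (not_lt.2 hd0))
      rw [hind0]
      by_cases hx : a0 ≤ x ∧ x < d
      · rw [ind_of_mem hx.1 hx.2]
        have := hbound x hx
        have := hp.2.1 d
        omega
      · rw [ind_of_not_mem hx]
        have := hp.2.1 x
        omega
    · -- nondecreasing on (-∞, 0]
      beta_reduce
      by_cases hx : a0 ≤ x ∧ x < d <;> by_cases hy : a0 ≤ y ∧ y < d
      · rw [ind_of_mem hx.1 hx.2, ind_of_mem hy.1 hy.2]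
        have := hp.2.2.1 hxy hy0
        omega
      · rw [ind_of_mem hx.1 hx.2, ind_of_not_mem hy]
        have hyd : d ≤ y := by
          rcases not_and_or.1 hy with h | h
          · exact absurd (le_trans hx.1 hxy) h
          · exact not_lt.1 h
        have h1 := hbound x hx
        have h2 := hp.2.2.1 hyd hy0
        omega
      · rw [ind_of_not_mem hx, ind_of_mem hy.1 hy.2]
        have hxa : x < a0 := by
          rcases not_and_or.1 hx with h | h
          · exact not_le.1 h
          · exact absurd (lt_of_le_of_lt hxy hy.2) h
        rw [h0 x hxa.le]
        omega
      · rw [ind_of_not_mem hx, ind_of_not_mem hy]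
        have := hp.2.2.1 hxy hy0
        omega
    · -- nonincreasing on [0, ∞)
      beta_reduce
      have hix : ind a0 d x = 0 :=
        ind_of_not_mem (fun hc => absurd (lt_of_le_of_lt hx0 hc.2) (not_lt.2 hd0))
      have hiy : ind a0 d y = 0 :=
        ind_of_not_mem (fun hc => absurd (lt_of_le_of_lt (le_trans hx0 hxy) hc.2) (not_lt.2 hd0))
      rw [hix, hiy]
      have := hp.2.2.2.1 hx0 hxy
      omega
    · -- jumps at most 1
      beta_reduce
      have hLL := leftLim_comb hp (fun m n => m + n) ha0d x
      rw [hLL]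
      by_cases hxa : x = a0
      · have h1 : ind a0 d x = 1 := by rw [hxa]; exact ind_of_mem (le_refl a0) ha0d
        have h2 : (if a0 < x ∧ x ≤ d then 1 else 0 : ℕ) = 0 := by
          rw [if_neg]; rintro ⟨hc, -⟩; rw [hxa] at hc; exact lt_irrefl a0 hc
        obtain ⟨u', hau', hud', hll', _⟩ := leftVal hp (x := x) (x - 1) (by linarith)
        have h3 : p u' = 0 := h0 u' (by rw [hxa] at hud'; linarith)
        have h4 : p x = 0 := h0 x (le_of_eq hxa)
        rw [h1, h2, hll', h3, h4]
        norm_num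
      · by_cases hxd : x = d
        · have h1 : ind a0 d x = 0 := by rw [hxd]; exact hindd
          have h2 : (if a0 < x ∧ x ≤ d then 1 else 0 : ℕ) = 1 := by
            rw [if_pos]; rw [hxd]; exact ⟨ha0d, le_refl d⟩
          have h3 : leftLim p x = p u := by rw [hxd]; exact hll
          have h4 : p x = p u + 1 := by rw [hxd]; exact hjump
          rw [h1, h2, h3, h4]
          push_cast
          rw [abs_le]
          constructor <;> linarith
        · have hsame : ind a0 d x = (if a0 < x ∧ x ≤ d then 1 else 0) := by
            rw [ind_eq_ite]
            by_cases h1 : a0 ≤ x ∧ x < d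
            · rw [if_pos h1, if_pos ⟨lt_of_le_of_ne h1.1 (Ne.symm hxa), h1.2.le⟩]
            · rw [if_neg h1, if_neg]
              rintro ⟨hc1, hc2⟩
              exact h1 ⟨hc1.le, lt_of_le_of_ne hc2 hxd⟩
          rw [hsame]
          have h := hp.2.2.2.2.2.2 x
          rw [abs_le] at h ⊢
          push_cast
          omega

lemma probeR (hp : IsRealPyramid p) {d b0 : ℝ} (hd0 : 0 < d) (hdb : d < b0)
    (h0 : ∀ x, b0 - 1 ≤ x → p x = 0) : Addable p d b0 ↔ ¬ContinuousAt p d := by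
  obtain ⟨u, hwu, hud, hll, hconst⟩ := leftVal hp (x := d) (d / 2) (by linarith)
  have hu0 : 0 ≤ u := le_trans (by linarith) hwu
  have hindd : ind d b0 d = 1 := ind_of_mem (le_refl d) hdb
  have hindu : ind d b0 u = 0 := ind_of_not_mem (fun hc => absurd hud (not_lt.2 hc.1))
  constructor
  · intro hadd
    have hmono := hadd.2.2.2.1 hu0 hud.le
    simp only [hindd, hindu] at hmono
    apply (disc_iff hp d).2
    rw [hll]
    omega
  · intro hd
    have hne : p u ≠ p d := by
      have := (disc_iff hp d).1 hd; rw [hll] at this; exact this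
    have hmono : p d ≤ p u := hp.2.2.2.1 hu0 hud.le
    have hjump : p u = p d + 1 := by
      have h := hp.2.2.2.2.2.2 d
      rw [hll, abs_le] at h
      omega
    have hbound : ∀ x ∈ Ico d b0, p x ≤ p d := by
      intro x hx
      exact hp.2.2.2.1 (le_trans hu0 hud.le) hx.1
    show IsRealPyramid fun x => p x + ind d b0 x
    obtain ⟨M, hM⟩ := hp.1
    refine ⟨⟨|M| + |d| + |b0| + 1, fun x hx => ?_⟩, fun x => ?_, fun x y hxy hy0 => ?_,
      fun x y hx0 hxy => ?_, fun x => rc_comb (fun m n => m + n) hp.2.2.2.2.1 x,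
      disc_comb (fun m n => m + n) hp.2.2.2.2.2.1, fun x => ?_⟩
    · -- bounded
      beta_reduce
      have h1 : p x = 0 := by
        apply hM
        have := abs_nonneg d; have := abs_nonneg b0; have := le_abs_self M; linarith
      have h2 : ind d b0 x = 0 := by
        apply ind_of_not_mem
        rintro ⟨hc1, hc2⟩
        have h3 : |x| ≤ |d| + |b0| := by
          rw [abs_le]
          constructor
          · have := neg_abs_le d; have := abs_nonneg b0; linarith
          · have := le_abs_self b0; have := abs_nonneg d; linarith
        have := abs_nonneg M; linarith
      rw [h1, h2]
    · -- max at 0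
      beta_reduce
      have hind0 : ind d b0 0 = 0 := ind_of_not_mem (fun hc => absurd hc.1 (not_le.2 hd0))
      rw [hind0]
      by_cases hx : d ≤ x ∧ x < b0
      · rw [ind_of_mem hx.1 hx.2]
        have h1 := hbound x hx
        have h2 : p u ≤ p 0 := hp.2.1 u
        omega
      · rw [ind_of_not_mem hx]
        have := hp.2.1 x
        omega
    · -- nondecreasing on (-∞, 0]
      beta_reduce
      have hix : ind d b0 x = 0 :=
        ind_of_not_mem (fun hc => absurd (le_trans hc.1 (le_trans hxy hy0)) (not_le.2 hd0))
      have hiy : ind d b0 y = 0 :=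
        ind_of_not_mem (fun hc => absurd (le_trans hc.1 hy0) (not_le.2 hd0))
      rw [hix, hiy]
      have := hp.2.2.1 hxy hy0
      omega
    · -- nonincreasing on [0, ∞)
      beta_reduce
      by_cases hx : d ≤ x ∧ x < b0 <;> by_cases hy : d ≤ y ∧ y < b0
      · rw [ind_of_mem hx.1 hx.2, ind_of_mem hy.1 hy.2]
        have := hp.2.2.2.1 hx0 hxy
        omega
      · rw [ind_of_mem hx.1 hx.2, ind_of_not_mem hy]
        have hyb : b0 ≤ y := by
          rcases not_and_or.1 hy with h | h
          · exact absurd (le_trans hx.1 hxy) h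
          · exact not_lt.1 h
        rw [h0 y (by linarith)]
        omega
      · rw [ind_of_not_mem hx, ind_of_mem hy.1 hy.2]
        have hxd : x < d := by
          rcases not_and_or.1 hx with h | h
          · exact not_le.1 h
          · exact absurd (lt_of_le_of_lt hxy hy.2) h
        have h1 := hbound y hy
        have h2 : p u ≤ p x := by
          rcases le_or_gt x u with h | h
          · exact hp.2.2.2.1 hx0 h
          · rw [hconst x ⟨h.le, hxd⟩]
        omega
      · rw [ind_of_not_mem hx, ind_of_not_mem hy]
        have := hp.2.2.2.1 hx0 hxy
        omega
    · -- jumps at most 1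
      beta_reduce
      have hLL := leftLim_comb hp (fun m n => m + n) hdb x
      rw [hLL]
      by_cases hxd : x = d
      · have h1 : ind d b0 x = 1 := by rw [hxd]; exact hindd
        have h2 : (if d < x ∧ x ≤ b0 then 1 else 0 : ℕ) = 0 := by
          rw [if_neg]; rintro ⟨hc, -⟩; rw [hxd] at hc; exact lt_irrefl d hc
        have h3 : leftLim p x = p u := by rw [hxd]; exact hll
        have h4 : p x = p d := by rw [hxd]
        rw [h1, h2, h3, h4, hjump]
        push_cast
        rw [abs_le]
        constructor <;> linarith
      · by_cases hxb : x = b0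
        · have h1 : ind d b0 x = 0 := by
            apply ind_of_not_mem; rw [hxb]; rintro ⟨-, hc⟩; exact lt_irrefl b0 hc
          have h2 : (if d < x ∧ x ≤ b0 then 1 else 0 : ℕ) = 1 := by
            rw [if_pos]; rw [hxb]; exact ⟨hdb, le_refl b0⟩
          obtain ⟨u', hau', hud', hll', _⟩ := leftVal hp (x := x) (b0 - 1) (by rw [hxb]; linarith)
          have h3 : p u' = 0 := h0 u' hau'
          have h4 : p x = 0 := h0 x (by rw [hxb]; linarith)
          rw [h1, h2, hll', h3, h4]
          norm_num
        · have hsame : ind d b0 x = (if d < x ∧ x ≤ b0 then 1 else 0) := by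
            rw [ind_eq_ite]
            by_cases h1 : d ≤ x ∧ x < b0
            · rw [if_pos h1, if_pos ⟨lt_of_le_of_ne h1.1 (Ne.symm hxd), h1.2.le⟩]
            · rw [if_neg h1, if_neg]
              rintro ⟨hc1, hc2⟩
              exact h1 ⟨hc1.le, lt_of_le_of_ne hc2 hxb⟩
          rw [hsame]
          have h := hp.2.2.2.2.2.2 x
          rw [abs_le] at h ⊢
          push_cast
          omega

end Probe
section Layer
variable {p : ℝ → ℕ}

lemma zero_pyramid : IsRealPyramid (fun _ => 0) := by
  refine ⟨⟨0, fun x _ => rfl⟩, fun x => le_refl _, fun x y _ _ => le_refl _,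
    fun x y _ _ => le_refl _, fun x => continuousWithinAt_const, ?_, fun x => ?_⟩
  · convert Set.finite_empty
    rw [Set.eq_empty_iff_forall_notMem]
    intro x hx
    exact hx continuousAt_const
  · have : leftLim (fun _ : ℝ => (0 : ℕ)) x = 0 :=
      leftLim_of_evconst (Eventually.of_forall fun _ => rfl)
    rw [this]
    simp

lemma rightConst (hrc : ∀ x, ContinuousWithinAt p (Ici x) x) (x : ℝ) :
    ∃ u, x < u ∧ ∀ y ∈ Ico x u, p y = p x := by
  have h := (cwa_iff p (Ici x) x).1 (hrc x)
  rw [eventually_iff, mem_nhdsGE_iff_exists_Ico_subset] at h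
  obtain ⟨u, hu, hsub⟩ := h
  exact ⟨u, hu, fun y hy => hsub hy⟩

lemma ind_le_of_removable {a b : ℝ} (h : Removable p a b) : ∀ x, ind a b x ≤ p x := by
  intro x
  by_cases hx : a ≤ x ∧ x < b
  · rw [ind_of_mem hx.1 hx.2]; exact h.1 x hx
  · rw [ind_of_not_mem hx]; exact Nat.zero_le _

lemma addable_of_removable {a b : ℝ} (hp : IsRealPyramid p) (h : Removable p a b) :
    Addable (fun x => p x - ind a b x) a b := by
  show IsRealPyramid fun x => (p x - ind a b x) + ind a b x
  have he : (fun x => (p x - ind a b x) + ind a b x) = p := by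
    funext x
    exact Nat.sub_add_cancel (ind_le_of_removable h x)
  rw [he]
  exact hp

lemma removable_of_addable {a b : ℝ} (hp : IsRealPyramid p) (hab : a < b) (h : Addable p a b) :
    Removable (fun x => p x + ind a b x) a b := by
  constructor
  · intro x hx
    beta_reduce
    rw [ind_of_mem hx.1 hx.2]
    omega
  · show IsRealPyramid fun x => (p x + ind a b x) - ind a b x
    have he : (fun x => (p x + ind a b x) - ind a b x) = p := by
      funext x
      omega
    rw [he]
    exact hp

lemma top_layer (hp : IsRealPyramid p) (h1 : 1 ≤ p 0) :
    ∃ a b, a ≤ 0 ∧ 0 < b ∧ a < b ∧ Removable p a b := by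
  classical
  set S := {x : ℝ | p 0 ≤ p x} with hS
  have h0S : (0 : ℝ) ∈ S := by rw [hS]; exact Set.mem_setOf_eq ▸ le_refl (p 0)
  have hSne : S.Nonempty := ⟨0, h0S⟩
  obtain ⟨M, hM⟩ := hp.1
  have hSbd : ∀ x ∈ S, |x| < |M| + 1 := by
    intro x hx
    by_contra hc
    push_neg at hc
    have : p x = 0 := hM x (by have := le_abs_self M; linarith)
    rw [hS, Set.mem_setOf_eq, this] at hx
    omega
  have hbdd_above : BddAbove S := ⟨|M| + 1, fun x hx => by
    have := hSbd x hx; have := le_abs_self x; linarith⟩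
  have hbdd_below : BddBelow S := ⟨-(|M| + 1), fun x hx => by
    have := hSbd x hx; have := neg_abs_le x; linarith⟩
  set a := sInf S with ha
  set b := sSup S with hb
  have ha0 : a ≤ 0 := csInf_le hbdd_below h0S
  have hb0' : 0 ≤ b := le_csSup hbdd_above h0S
  -- a ∈ S
  have haS : a ∈ S := by
    obtain ⟨u, hau, hconst⟩ := rightConst hp.2.2.2.2.1 a
    obtain ⟨s, hsS, hsu⟩ := exists_lt_of_csInf_lt hSne (show sInf S < u from hau)
    have has : a ≤ s := csInf_le hbdd_below hsS
    have : p s = p a := hconst s ⟨has, hsu⟩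
    rw [hS, Set.mem_setOf_eq, ← this]
    exact hsS
  -- b ∉ S
  have hbS : b ∉ S := by
    intro hbmem
    obtain ⟨u, hbu, hconst⟩ := rightConst hp.2.2.2.2.1 b
    have hmid : (b + u) / 2 ∈ S := by
      rw [hS, Set.mem_setOf_eq]
      rw [hconst ((b + u) / 2) ⟨by linarith, by linarith⟩]
      exact hbmem
    have := le_csSup hbdd_above hmid
    rw [← hb] at this
    linarith
  have hb0 : 0 < b := lt_of_le_of_ne hb0' (fun h => hbS (h ▸ h0S))
  have hab : a < b := lt_of_le_of_lt ha0 hb0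
  -- S = Ico a b
  have hmem : ∀ x, (a ≤ x ∧ x < b) ↔ p 0 ≤ p x := by
    intro x
    constructor
    · rintro ⟨hax, hxb⟩
      rcases le_or_gt x 0 with hx0 | hx0
      · exact le_trans haS (hp.2.2.1 hax hx0)
      · obtain ⟨s, hsS, hxs⟩ := exists_lt_of_lt_csSup hSne hxb
        exact le_trans hsS (hp.2.2.2.1 hx0.le hxs.le)
    · intro hx
      refine ⟨csInf_le hbdd_below hx, ?_⟩
      have := le_csSup hbdd_above hx
      exact lt_of_le_of_ne this (fun h => hbS (h ▸ hx))
  have hval : ∀ x, a ≤ x → x < b → p x = p 0 :=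
    fun x h1x h2x => le_antisymm (hp.2.1 x) ((hmem x).1 ⟨h1x, h2x⟩)
  have hout : ∀ x, ¬(a ≤ x ∧ x < b) → p x + 1 ≤ p 0 := by
    intro x hx
    have := (hmem x).2.mt hx
    omega
  refine ⟨a, b, ha0, hb0, hab, ⟨fun x hx => by rw [hval x hx.1 hx.2]; exact h1, ?_⟩⟩
  refine ⟨⟨|M| + 1, fun x hx => ?_⟩, fun x => ?_, fun x y hxy hy0 => ?_,
    fun x y hx0 hxy => ?_, fun x => rc_comb (fun m n => m - n) hp.2.2.2.2.1 x,
    disc_comb (fun m n => m - n) hp.2.2.2.2.2.1, fun x => ?_⟩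
  · -- bounded
    beta_reduce
    have h2 : p x = 0 := hM x (by have := le_abs_self M; linarith)
    rw [h2]
    simp
  · -- max at 0
    beta_reduce
    have h2 : ind a b 0 = 1 := ind_of_mem ha0 hb0
    rw [h2]
    by_cases hx : a ≤ x ∧ x < b
    · rw [ind_of_mem hx.1 hx.2, hval x hx.1 hx.2]
    · rw [ind_of_not_mem hx]
      have := hout x hx
      omega
  · -- nondecreasing on (-∞, 0]
    beta_reduce
    by_cases hx : a ≤ x ∧ x < b <;> by_cases hy : a ≤ y ∧ y < b
    · rw [ind_of_mem hx.1 hx.2, ind_of_mem hy.1 hy.2, hval x hx.1 hx.2, hval y hy.1 hy.2]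
    · exfalso
      rcases not_and_or.1 hy with h | h
      · exact h (le_trans hx.1 hxy)
      · exact h (lt_of_le_of_lt hy0 hb0)
    · rw [ind_of_not_mem hx, ind_of_mem hy.1 hy.2, hval y hy.1 hy.2]
      have := hout x hx
      omega
    · rw [ind_of_not_mem hx, ind_of_not_mem hy]
      have := hp.2.2.1 hxy hy0
      omega
  · -- nonincreasing on [0, ∞)
    beta_reduce
    by_cases hx : a ≤ x ∧ x < b <;> by_cases hy : a ≤ y ∧ y < b
    · rw [ind_of_mem hx.1 hx.2, ind_of_mem hy.1 hy.2, hval x hx.1 hx.2, hval y hy.1 hy.2]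
    · rw [ind_of_mem hx.1 hx.2, ind_of_not_mem hy, hval x hx.1 hx.2]
      have := hout y hy
      omega
    · exfalso
      rcases not_and_or.1 hx with h | h
      · exact h (le_trans ha0 hx0)
      · exact h (lt_of_le_of_lt hxy hy.2)
    · rw [ind_of_not_mem hx, ind_of_not_mem hy]
      have := hp.2.2.2.1 hx0 hxy
      omega
  · -- jumps
    beta_reduce
    rw [leftLim_comb hp (fun m n => m - n) hab x]
    by_cases hxa : x = a
    · have hia : ind a b x = 1 := by rw [hxa]; exact ind_of_mem (le_refl a) hab
      have hi2 : (if a < x ∧ x ≤ b then 1 else 0 : ℕ) = 0 := by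
        rw [if_neg]; rintro ⟨hc, -⟩; rw [hxa] at hc; exact lt_irrefl a hc
      obtain ⟨u, hwu, hux, hll, _⟩ := leftVal hp (x := x) (x - 1) (by linarith)
      have hu0 : p u + 1 ≤ p 0 := by
        apply hout
        rintro ⟨hc, -⟩
        rw [hxa] at hux
        exact absurd hc (not_le.2 hux)
      have hpa : p x = p 0 := by rw [hxa]; exact hval a (le_refl a) hab
      have hjl : |(p x : ℤ) - ((p u : ℕ) : ℤ)| ≤ 1 := by
        have h := hp.2.2.2.2.2.2 x
        rw [hll] at h
        exact h
      rw [hia, hi2, hll, abs_le]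
      rw [abs_le] at hjl
      omega
    · by_cases hxb : x = b
      · have hib : ind a b x = 0 := by
          apply ind_of_not_mem; rw [hxb]; rintro ⟨-, hc⟩; exact lt_irrefl b hc
        have hi2 : (if a < x ∧ x ≤ b then 1 else 0 : ℕ) = 1 := by
          rw [if_pos]; rw [hxb]; exact ⟨hab, le_refl b⟩
        obtain ⟨u, hwu, hux, hll, _⟩ := leftVal hp (x := x) a (by rw [hxb]; exact hab)
        have hpu : p u = p 0 := hval u hwu (by rw [hxb] at hux; exact hux)
        have hpb : p x + 1 ≤ p 0 := by
          apply hout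
          rintro ⟨-, hc⟩
          rw [hxb] at hc
          exact lt_irrefl b hc
        have hjl : |(p x : ℤ) - ((p u : ℕ) : ℤ)| ≤ 1 := by
          have h := hp.2.2.2.2.2.2 x
          rw [hll] at h
          exact h
        rw [hib, hi2, hll, abs_le]
        rw [abs_le] at hjl
        omega
      · by_cases hm : a < x ∧ x < b
        · have hia : ind a b x = 1 := ind_of_mem hm.1.le hm.2
          have hi2 : (if a < x ∧ x ≤ b then 1 else 0 : ℕ) = 1 := if_pos ⟨hm.1, hm.2.le⟩
          have hpx : p x = p 0 := hval x hm.1.le hm.2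
          obtain ⟨u, hwu, hux, hll, _⟩ := leftVal hp (x := x) a hm.1
          have hpu : p u = p 0 := hval u hwu (lt_trans hux hm.2)
          rw [hia, hi2, hll, hpx, hpu, abs_le]
          omega
        · have hia : ind a b x = 0 := by
            apply ind_of_not_mem
            rintro ⟨hc1, hc2⟩
            exact hm ⟨lt_of_le_of_ne hc1 (Ne.symm hxa), hc2⟩
          have hi2 : (if a < x ∧ x ≤ b then 1 else 0 : ℕ) = 0 := by
            rw [if_neg]
            rintro ⟨hc1, hc2⟩
            exact hm ⟨hc1, lt_of_le_of_ne hc2 hxb⟩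
          have hjl := hp.2.2.2.2.2.2 x
          rw [abs_le] at hjl
          rw [hia, hi2, abs_le]
          omega

end Layer
section Separation

lemma separation {p q : ℝ → ℕ} (hp : IsRealPyramid p) (hq : IsRealPyramid q) (hne : p ≠ q) :
    ∃ a b : ℝ, a < b ∧
      ((Addable p a b ∧ ¬ Addable q a b) ∨ (¬ Addable p a b ∧ Addable q a b)) := by
  have hD : {x : ℝ | ¬ContinuousAt p x} ≠ {x : ℝ | ¬ContinuousAt q x} := by
    intro h
    exact hne (eq_of_disc_eq hp hq h)
  have hd : ∃ d, ¬(¬ContinuousAt p d ↔ ¬ContinuousAt q d) := by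
    by_contra hc
    push_neg at hc
    apply hD
    ext z
    exact hc z
  obtain ⟨d, hd⟩ := hd
  obtain ⟨Mp, hMp⟩ := hp.1
  obtain ⟨Mq, hMq⟩ := hq.1
  set C := |Mp| + |Mq| + |d| + 1 with hC
  have hC0 : 0 < C := by
    have := abs_nonneg Mp; have := abs_nonneg Mq; have := abs_nonneg d; linarith
  rcases le_or_gt d 0 with hd0 | hd0
  · -- probe from the left
    have ha0d : -C < d := by
      have := neg_abs_le d
      have := abs_nonneg Mp; have := abs_nonneg Mq; linarith
    have hzp : ∀ x, x ≤ -C → p x = 0 := by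
      intro x hx
      apply hMp
      have h1 : |x| = -x := abs_of_nonpos (by linarith)
      have := le_abs_self Mp; have := abs_nonneg Mq; have := abs_nonneg d
      linarith
    have hzq : ∀ x, x ≤ -C → q x = 0 := by
      intro x hx
      apply hMq
      have h1 : |x| = -x := abs_of_nonpos (by linarith)
      have := le_abs_self Mq; have := abs_nonneg Mp; have := abs_nonneg d
      linarith
    have h1 := probeL hp ha0d hd0 hzp
    have h2 := probeL hq ha0d hd0 hzq
    refine ⟨-C, d, ha0d, ?_⟩
    rw [h1, h2]
    tauto
  · -- probe from the right
    have hdb : d < C + 1 := by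
      have := le_abs_self d
      have := abs_nonneg Mp; have := abs_nonneg Mq; linarith
    have hzp : ∀ x, (C + 1) - 1 ≤ x → p x = 0 := by
      intro x hx
      apply hMp
      have h1 : x ≤ |x| := le_abs_self x
      have := le_abs_self Mp; have := abs_nonneg Mq; have := abs_nonneg d
      linarith
    have hzq : ∀ x, (C + 1) - 1 ≤ x → q x = 0 := by
      intro x hx
      apply hMq
      have h1 : x ≤ |x| := le_abs_self x
      have := le_abs_self Mq; have := abs_nonneg Mp; have := abs_nonneg d
      linarith
    have h1 := probeR hp hd0 hdb hzp
    have h2 := probeR hq hd0 hdb hzq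
    refine ⟨d, C + 1, hdb, ?_⟩
    rw [h1, h2]
    tauto

end Separation

section Algebra

lemma tK_ne : tK ≠ 0 := RatFunc.X_ne_zero

lemma negv_ne : -vK ≠ 0 := by
  simp only [ne_eq, neg_eq_zero, vK]
  exact pow_ne_zero 2 tK_ne

lemma coef_mul_one {m n : ℤ} (h : m + n = -1) :
    (-tK * (-vK) ^ m) * (tK * (-vK) ^ n) = 1 := by
  have hv := negv_ne
  calc (-tK * (-vK) ^ m) * (tK * (-vK) ^ n)
      = -(tK ^ 2) * ((-vK) ^ m * (-vK) ^ n) := by ring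
    _ = (-vK) * (-vK) ^ (m + n) := by rw [← zpow_add₀ hv, vK]
    _ = (-vK) ^ (1 : ℤ) * (-vK) ^ (-1 : ℤ) := by rw [h, zpow_one]
    _ = 1 := by rw [← zpow_add₀ hv]; norm_num

lemma Eop_single (a b : ℝ) (p : Pyr) (c : K) :
    Eop a b (Finsupp.single p c) = c • Evec a b p := by
  simp [Eop, Finsupp.lsum_single, LinearMap.toSpanSingleton_apply]

lemma Fop_single (a b : ℝ) (p : Pyr) (c : K) :
    Fop a b (Finsupp.single p c) = c • Fvec a b p := by
  simp [Fop, Finsupp.lsum_single, LinearMap.toSpanSingleton_apply]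

lemma EF_single {a b : ℝ} (hab : a < b) (p : Pyr) (c : K) :
    Eop a b (Fop a b (Finsupp.single p c))
      = if Addable p.1 a b then Finsupp.single p c else 0 := by
  rw [Fop_single]
  by_cases h : Addable p.1 a b
  · rw [if_pos h]
    have hq : Fvec a b p = Finsupp.single
        (⟨fun x => p.1 x + ind a b x, h⟩ : Pyr)
        (tK * (-vK) ^ ((p.1 a : ℤ) - (p.1 b : ℤ))) := by
      rw [Fvec, dif_pos h]; rfl
    erw [hq, map_smul, Eop_single]
    set q : Pyr := ⟨fun x => p.1 x + ind a b x, h⟩ with hqdef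
    have hrem : Removable q.1 a b := removable_of_addable p.2 hab h
    have hE : Evec a b q = Finsupp.single
        (⟨fun x => q.1 x - ind a b x, hrem.2⟩ : Pyr)
        (-tK * (-vK) ^ ((q.1 b : ℤ) - (q.1 a : ℤ))) := by
      rw [Evec, dif_pos hrem]; rfl
    have hpq : (⟨fun x => q.1 x - ind a b x, hrem.2⟩ : Pyr) = p := by
      apply Subtype.ext
      funext x
      show (p.1 x + ind a b x) - ind a b x = p.1 x
      omega
    have hqb : q.1 b = p.1 b := by
      show p.1 b + ind a b b = p.1 b
      rw [ind_of_not_mem (fun hc => lt_irrefl b hc.2)]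
      omega
    have hqa : q.1 a = p.1 a + 1 := by
      show p.1 a + ind a b a = p.1 a + 1
      rw [ind_of_mem (le_refl a) hab]
    erw [hE, hpq, Finsupp.smul_single, Finsupp.smul_single]
    congr 1
    have key : (tK * (-vK) ^ ((p.1 a : ℤ) - (p.1 b : ℤ)))
        * (-tK * (-vK) ^ ((q.1 b : ℤ) - (q.1 a : ℤ))) = 1 := by
      rw [hqb, hqa]
      push_cast
      rw [mul_comm]
      exact coef_mul_one (by ring)
    rw [smul_eq_mul, smul_eq_mul, key, mul_one]
  · rw [if_neg h]
    have hq : Fvec a b p = 0 := by rw [Fvec, dif_neg h]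
    rw [hq, smul_zero, map_zero]

lemma EF_coeff {a b : ℝ} (hab : a < b) (y : Fock) (r : Pyr) :
    (Eop a b (Fop a b y)) r = if Addable r.1 a b then y r else 0 := by
  induction y using Finsupp.induction_linear with
  | zero => simp
  | add f g hf hg =>
    rw [map_add, map_add, Finsupp.add_apply, hf, hg, Finsupp.add_apply]
    split_ifs <;> simp
  | single p c =>
    rw [EF_single hab]
    by_cases h : Addable p.1 a b
    · rw [if_pos h]
      by_cases hpr : p = r
      · subst hpr
        rw [if_pos h]
      · rw [Finsupp.single_apply, if_neg hpr]
        split_ifs <;> simp [Finsupp.single_apply, hpr]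
    · rw [if_neg h, Finsupp.zero_apply]
      by_cases har : Addable r.1 a b
      · rw [if_pos har, Finsupp.single_apply, if_neg (fun hc : p = r => h (hc ▸ har))]
      · rw [if_neg har]

end Algebra
section Final

lemma Ecoef_ne (z : ℤ) : -tK * (-vK) ^ z ≠ 0 :=
  mul_ne_zero (neg_ne_zero.2 tK_ne) (zpow_ne_zero z negv_ne)

lemma Fcoef_ne (z : ℤ) : tK * (-vK) ^ z ≠ 0 :=
  mul_ne_zero tK_ne (zpow_ne_zero z negv_ne)

lemma isolate (W : Submodule K Fock)
    (hEF : ∀ a b : ℝ, a < b → ∀ x ∈ W, Eop a b (Fop a b x) ∈ W) :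
    ∀ n : ℕ, ∀ y : Fock, y ∈ W → y.support.card ≤ n → ∀ p : Pyr, y p ≠ 0 →
      Finsupp.single p (1 : K) ∈ W := by
  intro n
  induction n with
  | zero =>
    intro y hyW hcard p hyp
    exfalso
    have hsupp : y.support = ∅ := Finset.card_eq_zero.1 (Nat.le_zero.1 hcard)
    apply hyp
    apply Finsupp.notMem_support_iff.1
    rw [hsupp]
    exact Finset.notMem_empty p
  | succ n IH =>
    intro y hyW hcard p hyp
    by_cases hsub : y.support ⊆ {p}
    · have hy := Finsupp.support_subset_singleton.1 hsub
      have hmem := W.smul_mem (y p)⁻¹ hyW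
      rw [hy] at hmem
      simp only [Finsupp.single_eq_same, Finsupp.smul_single, smul_eq_mul,
        inv_mul_cancel₀ hyp] at hmem
      exact hmem
    · obtain ⟨q, hq, hqp⟩ := Finset.not_subset.1 hsub
      have hqp' : q ≠ p := fun h => hqp (Finset.mem_singleton.2 h)
      have hne1 : p.1 ≠ q.1 := fun hh => hqp' (Subtype.ext hh.symm)
      obtain ⟨a, b, hab, hcase⟩ := separation p.2 q.2 hne1
      rcases hcase with ⟨hP, hQ⟩ | ⟨hP, hQ⟩
      · set y' := Eop a b (Fop a b y) with hy'
        have hy'W : y' ∈ W := hEF a b hab y hyW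
        have hy'p : y' p = y p := by rw [hy', EF_coeff hab, if_pos hP]
        have hy'q : y' q = 0 := by rw [hy', EF_coeff hab, if_neg hQ]
        have hsupp : y'.support ⊆ y.support := by
          intro r hr
          rw [Finsupp.mem_support_iff] at hr ⊢
          intro h0
          apply hr
          rw [hy', EF_coeff hab, h0]
          split_ifs <;> rfl
        have hss : y'.support ⊂ y.support :=
          (Finset.ssubset_iff_of_subset hsupp).2
            ⟨q, hq, Finsupp.notMem_support_iff.2 hy'q⟩
        have hlt := Finset.card_lt_card hss
        exact IH y' hy'W (by omega) p (by rw [hy'p]; exact hyp)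
      · set y' := y - Eop a b (Fop a b y) with hy'
        have hy'W : y' ∈ W := sub_mem hyW (hEF a b hab y hyW)
        have hy'p : y' p = y p := by
          rw [hy', Finsupp.sub_apply, EF_coeff hab, if_neg hP, sub_zero]
        have hy'q : y' q = 0 := by
          rw [hy', Finsupp.sub_apply, EF_coeff hab, if_pos hQ, sub_self]
        have hsupp : y'.support ⊆ y.support := by
          intro r hr
          rw [Finsupp.mem_support_iff] at hr ⊢
          intro h0
          apply hr
          rw [hy', Finsupp.sub_apply, EF_coeff hab, h0]
          split_ifs <;> simp
        have hss : y'.support ⊂ y.support :=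
          (Finset.ssubset_iff_of_subset hsupp).2
            ⟨q, hq, Finsupp.notMem_support_iff.2 hy'q⟩
        have hlt := Finset.card_lt_card hss
        exact IH y' hy'W (by omega) p (by rw [hy'p]; exact hyp)

/-- the zero pyramid -/
def pyr0 : Pyr := ⟨fun _ => 0, zero_pyramid⟩

lemma eq_pyr0 {p : Pyr} (h : p.1 0 = 0) : p = pyr0 :=
  Subtype.ext (funext fun x => Nat.le_zero.1 (h ▸ p.2.2.1 x))

lemma to_vac (W : Submodule K Fock)
    (hE : ∀ a b : ℝ, a < b → ∀ x ∈ W, Eop a b x ∈ W) :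
    ∀ n : ℕ, ∀ p : Pyr, p.1 0 ≤ n → Finsupp.single p (1 : K) ∈ W →
      Finsupp.single pyr0 (1 : K) ∈ W := by
  intro n
  induction n with
  | zero =>
    intro p hp hmem
    rwa [eq_pyr0 (Nat.le_zero.1 hp)] at hmem
  | succ n IH =>
    intro p hp hmem
    by_cases h0 : p.1 0 = 0
    · rwa [eq_pyr0 h0] at hmem
    · obtain ⟨a, b, ha0, hb0, hab, hrem⟩ := top_layer p.2 (by omega)
      have hmem2 := hE a b hab _ hmem
      rw [Eop_single, one_smul, Evec, dif_pos hrem] at hmem2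
      have hc := Ecoef_ne ((p.1 b : ℤ) - (p.1 a : ℤ))
      have hmem3 := W.smul_mem (-tK * (-vK) ^ ((p.1 b : ℤ) - (p.1 a : ℤ)))⁻¹ hmem2
      erw [Finsupp.smul_single, smul_eq_mul, inv_mul_cancel₀ hc] at hmem3
      apply IH ⟨fun x => p.1 x - ind a b x, hrem.2⟩ ?_ hmem3
      show p.1 0 - ind a b 0 ≤ n
      rw [ind_of_mem ha0 hb0]
      omega

lemma from_vac (W : Submodule K Fock)
    (hF : ∀ a b : ℝ, a < b → ∀ x ∈ W, Fop a b x ∈ W) :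
    ∀ n : ℕ, ∀ p : Pyr, p.1 0 ≤ n → Finsupp.single pyr0 (1 : K) ∈ W →
      Finsupp.single p (1 : K) ∈ W := by
  intro n
  induction n with
  | zero =>
    intro p hp hmem
    rwa [← eq_pyr0 (Nat.le_zero.1 hp)] at hmem
  | succ n IH =>
    intro p hp hmem
    by_cases h0 : p.1 0 = 0
    · rwa [← eq_pyr0 h0] at hmem
    · obtain ⟨a, b, ha0, hb0, hab, hrem⟩ := top_layer p.2 (by omega)
      set p' : Pyr := ⟨fun x => p.1 x - ind a b x, hrem.2⟩ with hp'
      have hadd : Addable p'.1 a b := addable_of_removable p.2 hrem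
      have hmem2 : Finsupp.single p' (1 : K) ∈ W := by
        apply IH p' ?_ hmem
        show p.1 0 - ind a b 0 ≤ n
        rw [ind_of_mem ha0 hb0]
        omega
      have hmem3 := hF a b hab _ hmem2
      rw [Fop_single, one_smul, Fvec, dif_pos hadd] at hmem3
      have hpp : (⟨fun x => p'.1 x + ind a b x, hadd⟩ : Pyr) = p := by
        apply Subtype.ext
        funext x
        show (p.1 x - ind a b x) + ind a b x = p.1 x
        exact Nat.sub_add_cancel (ind_le_of_removable hrem x)
      rw [hpp] at hmem3
      have hc := Fcoef_ne ((p'.1 a : ℤ) - (p'.1 b : ℤ))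
      have hmem4 := W.smul_mem (tK * (-vK) ^ ((p'.1 a : ℤ) - (p'.1 b : ℤ)))⁻¹ hmem3
      erw [Finsupp.smul_single, smul_eq_mul, inv_mul_cancel₀ hc] at hmem4
      exact hmem4

end Final
/-- the Fock space is irreducible: every `K`-linear subspace stable under
all the operators `E_J` and `F_J` is `{0}` or the whole Fock space. -/
theorem fock_irreducible (W : Submodule K Fock)
    (hE : ∀ a b : ℝ, a < b → ∀ x ∈ W, Eop a b x ∈ W)
    (hF : ∀ a b : ℝ, a < b → ∀ x ∈ W, Fop a b x ∈ W) :
    W = ⊥ ∨ W = ⊤ := by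
  by_cases hbot : W = ⊥
  · exact Or.inl hbot
  · right
    obtain ⟨y, hyW, hy0⟩ := (Submodule.ne_bot_iff W).1 hbot
    have hp : ∃ p : Pyr, y p ≠ 0 := by
      by_contra hc
      push_neg at hc
      exact hy0 (Finsupp.ext fun p => hc p)
    obtain ⟨p, hyp⟩ := hp
    have hEF : ∀ a b : ℝ, a < b → ∀ x ∈ W, Eop a b (Fop a b x) ∈ W :=
      fun a b hab x hx => hE a b hab _ (hF a b hab x hx)
    have hsingle : Finsupp.single p (1 : K) ∈ W :=
      isolate W hEF y.support.card y hyW (le_refl _) p hyp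
    have hvac : Finsupp.single pyr0 (1 : K) ∈ W :=
      to_vac W hE (p.1 0) p (le_refl _) hsingle
    rw [Submodule.eq_top_iff']
    intro z
    induction z using Finsupp.induction_linear with
    | zero => exact W.zero_mem
    | add f g hf hg => exact W.add_mem hf hg
    | single q c =>
      have : Finsupp.single q c = c • Finsupp.single q (1 : K) := by
        rw [Finsupp.smul_single, smul_eq_mul, mul_one]
      rw [this]
      exact W.smul_mem c (from_vac W hF (q.1 0) q (le_refl _) hvac)
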